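/- In the diode element E_i, a walker that repeats a periodic sequence of moves over nodes labelled m (with net drift in direction a) and that, upon reaching the node pair {u_M, u_{-M}}, makes teleporting moves in directions ±b_i given by a string w ∈ {b_i, -b_i}*, reaches the segment beyond u_M (towards u_{2M}) without returning to u₀ only if |w| is even; if |w| is odd the walker is teleported to u_{-M} and, drifting in direction a, returns to u₀. -/

import Mathlib

attribute [local instance 10] Classical.propDecidable

/-- A signature: directions with an involutive opposite, node labels,
initial labels, and the set of directions allowed at each label. -/
structure Signature where
  Dir : Type
  neg : Dir → Dir
  neg_neg : ∀ d, neg (neg d) = d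
  Lab : Type
  isInit : Lab → Bool
  dirs : Lab → Set Dir

/-- A finite graph over a signature. -/
structure SGraph (S : Signature) where
  V : Type
  fin : Finite V
  v0 : V
  lab : V → S.Lab
  move : V → S.Dir → Option V
  move_inv : ∀ v d w, move v d = some w → move w (S.neg d) = some v
  move_defined : ∀ v d, (move v d).isSome ↔ d ∈ S.dirs (lab v)
  init_iff : ∀ v, S.isInit (lab v) = true ↔ v = v0

/-- A deterministic graph-walking automaton over a signature. -/
structure GWA (S : Signature) where
  Q : Type
  finQ : Finite Q
  q0 : Q
  F : Q → S.Lab → Bool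
  δ : Q → S.Lab → Option (Q × S.Dir)
  δ_dir : ∀ q a p d, δ q a = some (p, d) → d ∈ S.dirs a
  δ_not_F : ∀ q a, F q a = true → δ q a = none

namespace GWA

variable {S : Signature}

/-- One step of the computation, over an abstract node set with a move
function and a labelling. -/
def stepOn (A : GWA S) {V : Type} (move : V → S.Dir → Option V) (lab : V → S.Lab) :
    A.Q × V → Option (A.Q × V) := fun c =>
  if A.F c.1 (lab c.2) = true then none
  else match A.δ c.1 (lab c.2) with
    | none => none
    | some (p, d) => (move c.2 d).map fun w => (p, w)

/-- The configuration after `t` steps, starting from configuration `c`. -/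
def runOn (A : GWA S) {V : Type} (move : V → S.Dir → Option V) (lab : V → S.Lab)
    (c : A.Q × V) : ℕ → Option (A.Q × V)
  | 0 => some c
  | n + 1 => (runOn A move lab c n).bind (A.stepOn move lab)

def runFrom (A : GWA S) (G : SGraph S) (c : A.Q × G.V) : ℕ → Option (A.Q × G.V) :=
  A.runOn G.move G.lab c

/-- The computation of `A` on `G`, from the initial configuration. -/
def run (A : GWA S) (G : SGraph S) : ℕ → Option (A.Q × G.V) :=
  A.runFrom G (A.q0, G.v0)

def stateAt (A : GWA S) (G : SGraph S) (c : A.Q × G.V) (t : ℕ) : Option A.Q :=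
  (A.runFrom G c t).map Prod.fst

def nodeAt (A : GWA S) (G : SGraph S) (c : A.Q × G.V) (t : ℕ) : Option G.V :=
  (A.runFrom G c t).map Prod.snd

/-- The direction used by the transition taken at time `t`. -/
def dirAt (A : GWA S) (G : SGraph S) (c : A.Q × G.V) (t : ℕ) : Option S.Dir :=
  (A.runFrom G c t).bind fun x => (A.δ x.1 (G.lab x.2)).map Prod.snd

def Accepts (A : GWA S) (G : SGraph S) : Prop :=
  ∃ n c, A.run G n = some c ∧ A.F c.1 (G.lab c.2) = true

/-- A GWA is returning if it can accept only at the initial node. -/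
def Returning (A : GWA S) : Prop :=
  ∀ q a, A.F q a = true → S.isInit a = true

/-- A GWA is halting if its computation on every (finite) graph is finite. -/
def Halting (A : GWA S) : Prop :=
  ∀ G : SGraph S, ∃ n, A.run G n = none

/-- Direction-determinate: every state is entered in a unique direction. -/
def DirDet (A : GWA S) (d : A.Q → S.Dir) : Prop :=
  ∀ p a q d', A.δ p a = some (q, d') → d' = d q

/-- Backward determinism of the transition function. -/
def BackDet (A : GWA S) (d : A.Q → S.Dir) : Prop :=
  ∀ a q p1 p2, A.δ p1 a = some (q, d q) → A.δ p2 a = some (q, d q) → p1 = p2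

/-- A reversible graph-walking automaton. -/
def Reversible (A : GWA S) : Prop :=
  (∃ d : A.Q → S.Dir, A.DirDet d ∧ A.BackDet d) ∧ A.Returning ∧
    ∀ a q1 q2, A.F q1 a = true → A.F q2 a = true → q1 = q2

/-- The state `q` is entered via a transition in direction `d` taken during
the computation of `A` on `G`. -/
def EnteredVia (A : GWA S) (G : SGraph S) (d : S.Dir) (q : A.Q) : Prop :=
  ∃ t c, A.run G t = some c ∧ A.δ c.1 (G.lab c.2) = some (q, d)

end GWA

/-! The diode signature S_k (with r = ⌊(k-2)/2⌋) and the diode element E_i. -/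

/-- Directions: `inl true` = a, `inl false` = -a, `inr (i, true)` = b_{i+1},
`inr (i, false)` = -b_{i+1}. -/
abbrev DirK (r : ℕ) := Bool ⊕ (Fin r × Bool)

/-- Node labels: `inl (i, true)` = m_{i+1}, `inl (i, false)` = m_{-(i+1)},
`inr 0` = m, `inr 1` = m_e, `inr 2` = m_a. -/
abbrev LabK (r : ℕ) := (Fin r × Bool) ⊕ Fin 3

def negK (r : ℕ) : DirK r → DirK r
  | .inl s => .inl (!s)
  | .inr (i, s) => .inr (i, !s)

/-- The signature S_k. -/
def SK (r : ℕ) : Signature where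
  Dir := DirK r
  neg := negK r
  neg_neg := by rintro (s | ⟨i, s⟩) <;> simp [negK]
  Lab := LabK r
  isInit := fun _ => false
  dirs := fun l => match l with
    | .inl (i, _) => {Sum.inl false, Sum.inr (i, true), Sum.inr (i, false)}
    | .inr j =>
        if j.val = 0 then Set.univ
        else if j.val = 1 then
          {d | d = Sum.inl true ∨ d = Sum.inl false ∨
            ∃ h : 0 < r, d = Sum.inr (⟨0, h⟩, true)}
        else
          {d | d = Sum.inl true ∨ ∃ h : 0 < r, d = Sum.inr (⟨0, h⟩, false)}

/-- M = (4nk)!. -/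
def bigM (n k : ℕ) : ℕ := (4 * n * k).factorial

/-- Nodes of a diode element: the main cycle u_0, …, u_{8M-1}, the small
cycle u'_0, …, u'_{M-1}, and the two special nodes u_in (`inr (inr false)`)
and u_out (`inr (inr true)`). -/
abbrev EV (M : ℕ) := ZMod (8 * M) ⊕ (ZMod M ⊕ Bool)

def uIn (M : ℕ) : EV M := Sum.inr (Sum.inr false)
def uOut (M : ℕ) : EV M := Sum.inr (Sum.inr true)

/-- The edges of the element E_{i+1} (positive index). External edges
(u_in - a and u_out + a) are left undefined here. -/
noncomputable def posMove (r M : ℕ) (i : Fin r) : EV M → DirK r → Option (EV M) :=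
  fun v d =>
    let Mz : ZMod (8 * M) := (M : ZMod (8 * M))
    match v, d with
    | .inl j, .inl true => some (.inl (j + 1))
    | .inl j, .inl false => some (.inl (j - 1))
    | .inl j, .inr (s, sg) =>
        if s = i then
          if j = Mz then some (.inl (-Mz))
          else if j = -Mz then some (.inl Mz)
          else if j = 2 * Mz then some (.inl (if sg then 3 * Mz else -(3 * Mz)))
          else if j = 3 * Mz then some (.inl (if sg then -(2 * Mz) else 2 * Mz))
          else if j = -(2 * Mz) then some (.inl (if sg then -(3 * Mz) else 3 * Mz))
          else if j = -(3 * Mz) then some (.inl (if sg then 2 * Mz else -(2 * Mz)))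
          else if j = 4 * Mz then
            (if sg then some (.inr (.inl 0)) else some (.inr (.inr false)))
          else if j = 0 then
            (if sg = true ∧ i.val = 0 then some (.inr (.inr true)) else none)
          else some (.inl j)
        else
          if j = 0 then
            (if s.val = 0 ∧ sg = true then some (.inr (.inr true)) else none)
          else some (.inl j)
    | .inr (.inl j'), .inl true => some (.inr (.inl (j' + 1)))
    | .inr (.inl j'), .inl false => some (.inr (.inl (j' - 1)))
    | .inr (.inl j'), .inr (s, sg) =>
        if j' = 0 ∧ s = i then
          (if sg then some (.inr (.inr false)) else some (.inl (4 * Mz)))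
        else some (.inr (.inl j'))
    | .inr (.inr false), .inl _ => none
    | .inr (.inr false), .inr (s, sg) =>
        if s = i then
          (if sg then some (.inl (4 * Mz)) else some (.inr (.inl 0)))
        else none
    | .inr (.inr true), .inl _ => none
    | .inr (.inr true), .inr (s, sg) =>
        if s.val = 0 ∧ sg = false then some (.inl 0) else none

/-- Swap the directions b_{i+1} and -b_{i+1}. -/
def flipI (r : ℕ) (i : Fin r) : DirK r → DirK r
  | .inr (j, s) => if j = i then .inr (j, !s) else .inr (j, s)
  | .inl s => .inl s

/-- The edges of the element E_{±(i+1)}: `σ = true` gives E_{i+1} and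
`σ = false` gives E_{-(i+1)} (with b_{i+1} and -b_{i+1} swapped). -/
noncomputable def elemMove (r M : ℕ) (i : Fin r) (σ : Bool) (v : EV M) (d : DirK r) :
    Option (EV M) :=
  posMove r M i v (if σ then d else flipI r i d)

/-- Node labels of the element E_{±(i+1)}. -/
noncomputable def elemLab (r M : ℕ) (i : Fin r) (σ : Bool) : EV M → LabK r
  | .inl j => if j = 0 then .inr 1 else .inr 0
  | .inr (.inl _) => .inr 0
  | .inr (.inr false) => .inl (i, σ)
  | .inr (.inr true) => .inr 2

/-! Computations of a walker inside the element E_{i+1}. -/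

noncomputable def eRun (r M : ℕ) (i : Fin r) (A : GWA (SK r)) (c : A.Q × EV M)
    (t : ℕ) : Option (A.Q × EV M) :=
  A.runOn (elemMove r M i true) (elemLab r M i true) c t

noncomputable def eState (r M : ℕ) (i : Fin r) (A : GWA (SK r)) (c : A.Q × EV M)
    (t : ℕ) : Option A.Q :=
  (eRun r M i A c t).map Prod.fst

noncomputable def eNode (r M : ℕ) (i : Fin r) (A : GWA (SK r)) (c : A.Q × EV M)
    (t : ℕ) : Option (EV M) :=
  (eRun r M i A c t).map Prod.snd

noncomputable def eDir (r M : ℕ) (i : Fin r) (A : GWA (SK r)) (c : A.Q × EV M)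
    (t : ℕ) : Option (DirK r) :=
  (eRun r M i A c t).bind fun x => (A.δ x.1 (elemLab r M i true x.2)).map Prod.snd

/-- A teleporting move: a move in a direction ±b_{i+1} made at one of the
nodes u_M, u_{-M}. -/
def Teleport (r M : ℕ) (i : Fin r) (A : GWA (SK r)) (c : A.Q × EV M) (t : ℕ) : Prop :=
  (eNode r M i A c t = some (Sum.inl ((M : ZMod (8 * M)))) ∨
    eNode r M i A c t = some (Sum.inl (-(M : ZMod (8 * M))))) ∧
  ∃ s : Bool, eDir r M i A c t = some (Sum.inr (i, s))

section Aux15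
variable (r M : ℕ) (i : Fin r) (A : GWA (SK r)) (c : A.Q × EV M)

/-- Signed a-direction of the step at time t. -/
noncomputable def gD (t : ℕ) : ℤ :=
  if eDir r M i A c t = some (Sum.inl true) then 1
  else if eDir r M i A c t = some (Sum.inl false) then -1 else 0

/-- Number of teleports before time t. -/
noncomputable def eC (t : ℕ) : ℕ :=
  ((Finset.range t).filter (fun s => Teleport r M i A c s)).card

/-- The virtual position. -/
noncomputable def yP : ℕ → ℤ
  | 0 => (M : ℤ)
  | t + 1 => yP t + (if Even (eC r M i A c t) then gD r M i A c t else - gD r M i A c t)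

lemma eC_succ (t : ℕ) :
    eC r M i A c (t+1) = eC r M i A c t + (if Teleport r M i A c t then 1 else 0) := by
  unfold eC
  rw [Finset.range_add_one, Finset.filter_insert]
  split
  · rw [Finset.card_insert_of_notMem (by simp), add_comm]
  · simp

lemma gD_bounds (t : ℕ) : -1 ≤ gD r M i A c t ∧ gD r M i A c t ≤ 1 := by
  unfold gD; split <;> [omega; (split <;> omega)]

lemma eRun_succ (t : ℕ) : eRun r M i A c (t+1) =
    (eRun r M i A c t).bind (A.stepOn (elemMove r M i true) (elemLab r M i true)) := rfl

end Aux15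
lemma castInjZ (M : ℕ) (hM : 0 < M) (a b : ℤ) (ha : 0 ≤ a) (ha' : a < 8*M) (hb : 0 ≤ b)
    (hb' : b < 8*M) (h : (a : ZMod (8*M)) = b) : a = b := by
  have h2 := (ZMod.intCast_eq_intCast_iff _ _ _).1 h
  rcases h2.dvd with ⟨u, hu⟩
  have hpos : (0:ℤ) < 8*(M:ℤ) := by positivity
  push_cast at hu ha' hb'
  have hu0 : u = 0 := by nlinarith
  rw [hu0, mul_zero] at hu; linarith

section Aux2
variable (r M : ℕ) (i : Fin r) (A : GWA (SK r))

lemma cast8M : (((8*M : ℕ) : ZMod (8*M))) = 0 := ZMod.natCast_self _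

lemma castNeg (a : ℤ) : -((a : ZMod (8*M))) = ((8*M - a : ℤ) : ZMod (8*M)) := by
  have h := cast8M M
  push_cast at h ⊢
  linear_combination -h

lemma castEq (hM : 0 < M) (a b : ℤ) (ha : 0 ≤ a) (ha' : a < 8*M) (hb : 0 ≤ b)
    (hb' : b < 8*M) : ((a : ZMod (8*M)) = (b : ZMod (8*M))) ↔ a = b :=
  ⟨castInjZ M hM a b ha ha' hb hb', by rintro rfl; rfl⟩

lemma loopMove (hM : 0 < M) (z : ℤ) (h0 : 0 ≤ z) (h8 : z < 8*M)
    (hz : ∀ j : ℕ, j < 8 → z ≠ j * M) (s : Fin r) (sg : Bool) :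
    elemMove r M i true (.inl ((z : ZMod (8*M)))) (.inr (s, sg)) =
      some (.inl ((z : ZMod (8*M)))) := by
  have hM' : (0:ℤ) < (M:ℤ) := by exact_mod_cast hM
  have key : ∀ b : ℤ, 0 ≤ b → b < 8*M → z ≠ b → ((z : ZMod (8*M)) ≠ (b : ZMod (8*M))) := by
    intro b hb hb' hne h
    exact hne (castInjZ M hM z b h0 h8 hb hb' h)
  have e1 : ((M:ℕ) : ZMod (8*M)) = ((M : ℤ) : ZMod (8*M)) := by push_cast; ring
  have e2 : ∀ a : ℕ, (a : ZMod (8*M)) * ((M:ℕ) : ZMod (8*M)) = (((a*M : ℤ)) : ZMod (8*M)) := by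
    intro a; push_cast; ring
  have h1 : (z : ZMod (8*M)) ≠ ((M:ℕ) : ZMod (8*M)) := by
    rw [e1]; exact key M hM'.le (by linarith) (by simpa using hz 1 (by norm_num))
  have h2 : (z : ZMod (8*M)) ≠ -((M:ℕ) : ZMod (8*M)) := by
    rw [e1, castNeg]
    exact key (8*M - M) (by linarith) (by linarith) (by have := hz 7 (by norm_num); push_cast at this ⊢; omega)
  have h3 : (z : ZMod (8*M)) ≠ 2 * ((M:ℕ) : ZMod (8*M)) := by
    rw [e1, show (2 : ZMod (8*M)) * ((M:ℤ) : ZMod (8*M)) = ((2*M : ℤ) : ZMod (8*M)) by push_cast; ring]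
    exact key (2*M) (by linarith) (by linarith) (by have := hz 2 (by norm_num); push_cast at this ⊢; omega)
  have h4 : (z : ZMod (8*M)) ≠ 3 * ((M:ℕ) : ZMod (8*M)) := by
    rw [e1, show (3 : ZMod (8*M)) * ((M:ℤ) : ZMod (8*M)) = ((3*M : ℤ) : ZMod (8*M)) by push_cast; ring]
    exact key (3*M) (by linarith) (by linarith) (by have := hz 3 (by norm_num); push_cast at this ⊢; omega)
  have h5 : (z : ZMod (8*M)) ≠ -(2 * ((M:ℕ) : ZMod (8*M))) := by
    rw [e1, show (2 : ZMod (8*M)) * ((M:ℤ) : ZMod (8*M)) = ((2*M : ℤ) : ZMod (8*M)) by push_cast; ring, castNeg]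
    exact key (8*M - 2*M) (by linarith) (by linarith) (by have := hz 6 (by norm_num); push_cast at this ⊢; omega)
  have h6 : (z : ZMod (8*M)) ≠ -(3 * ((M:ℕ) : ZMod (8*M))) := by
    rw [e1, show (3 : ZMod (8*M)) * ((M:ℤ) : ZMod (8*M)) = ((3*M : ℤ) : ZMod (8*M)) by push_cast; ring, castNeg]
    exact key (8*M - 3*M) (by linarith) (by linarith) (by have := hz 5 (by norm_num); push_cast at this ⊢; omega)
  have h7 : (z : ZMod (8*M)) ≠ 4 * ((M:ℕ) : ZMod (8*M)) := by
    rw [e1, show (4 : ZMod (8*M)) * ((M:ℤ) : ZMod (8*M)) = ((4*M : ℤ) : ZMod (8*M)) by push_cast; ring]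
    exact key (4*M) (by linarith) (by linarith) (by have := hz 4 (by norm_num); push_cast at this ⊢; omega)
  have h8' : (z : ZMod (8*M)) ≠ 0 := by
    rw [show (0 : ZMod (8*M)) = ((0:ℤ) : ZMod (8*M)) by push_cast; ring]
    exact key 0 le_rfl (by linarith) (by simpa using hz 0 (by norm_num))
  simp only [elemMove, if_pos, posMove]
  by_cases hsi : s = i
  · rw [if_pos hsi, if_neg h1, if_neg h2, if_neg h3, if_neg h4, if_neg h5, if_neg h6,
      if_neg h7, if_neg h8']
  · rw [if_neg hsi, if_neg h8']

end Aux2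
lemma windowSum (p T : ℕ) (g : ℕ → ℤ) (hp : 1 ≤ p)
    (hper : ∀ t, t + p < T → g (t+p) = g t)
    (hbd : ∀ t, -1 ≤ g t)
    (hbase : 1 ≤ ∑ s ∈ Finset.range p, g s) :
    ∀ L u, u + L ≤ T → (1 - (p:ℤ)) ≤ ∑ s ∈ Finset.Ico u (u+L), g s := by
  intro L
  induction L using Nat.strong_induction_on with
  | _ L IH =>
    intro u hu
    by_cases hL : L < p
    · have h1 : ∑ s ∈ Finset.Ico u (u+L), (-1 : ℤ) ≤ ∑ s ∈ Finset.Ico u (u+L), g s :=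
        Finset.sum_le_sum (fun s _ => hbd s)
      rw [Finset.sum_const, Nat.card_Ico] at h1
      have : u + L - u = L := by omega
      rw [this] at h1
      have : (L:ℤ) ≤ (p:ℤ) - 1 := by push_cast; omega
      simp only [nsmul_eq_mul, mul_neg, mul_one] at h1
      linarith
    · have hpL : p ≤ L := not_lt.mp hL
      have hsplit : ∑ s ∈ Finset.Ico u (u+L), g s =
          ∑ s ∈ Finset.Ico u (u+p), g s + ∑ s ∈ Finset.Ico (u+p) (u+L), g s :=
        (Finset.sum_Ico_consecutive _ (by omega) (by omega)).symm
      have aux : ∀ w, w + p ≤ T → ∑ s ∈ Finset.range p, g (w+s) = ∑ s ∈ Finset.range p, g s := by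
        intro w
        induction w with
        | zero => intro _; simp
        | succ w ih =>
          intro hw
          have e1 : ∑ s ∈ Finset.range p, g (w+1+s) = ∑ s ∈ Finset.range p, g (w+(s+1)) :=
            Finset.sum_congr rfl (fun s _ => by ring_nf)
          have e2 := Finset.sum_range_succ' (fun s => g (w+s)) p
          have e3 := Finset.sum_range_succ (fun s => g (w+s)) p
          have e4 : g (w+p) = g w := hper w (by omega)
          rw [e1]
          have : ∑ s ∈ Finset.range p, g (w+(s+1)) = ∑ s ∈ Finset.range p, g (w+s) := by
            rw [e4] at e3
            have : w + 0 = w := by omega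
            rw [this] at e2
            linarith
          rw [this]; exact ih (by omega)
      have hw : ∑ s ∈ Finset.Ico u (u+p), g s = ∑ s ∈ Finset.range p, g s := by
        rw [Finset.sum_Ico_eq_sum_range]
        have : u + p - u = p := by omega
        rw [this]
        exact aux u (by omega)
      have h2 := IH (L - p) (by omega) (u+p) (by omega)
      have h3 : u + p + (L - p) = u + L := by omega
      rw [h3] at h2
      rw [hsplit, hw]
      linarith
section Aux4
variable (r M : ℕ) (i : Fin r) (A : GWA (SK r)) (c : A.Q × EV M)

lemma loopMoveNe (z : ZMod (8*M)) (hz : z ≠ 0) (s : Fin r) (hs : s ≠ i) (sg : Bool) :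
    elemMove r M i true (.inl z) (.inr (s, sg)) = some (.inl z) := by
  simp only [elemMove, if_pos, posMove]
  rw [if_neg hs, if_neg hz]

lemma telMoveM (hM : 0 < M) (sg : Bool) :
    elemMove r M i true (.inl ((M : ZMod (8*M)))) (.inr (i, sg)) =
      some (.inl (-(M : ZMod (8*M)))) := by
  simp only [elemMove, if_pos, posMove]

lemma telMove7 (hM : 0 < M) (sg : Bool) :
    elemMove r M i true (.inl (-(M : ZMod (8*M)))) (.inr (i, sg)) =
      some (.inl ((M : ZMod (8*M)))) := by
  have hne : -((M:ℕ) : ZMod (8*M)) ≠ ((M:ℕ) : ZMod (8*M)) := by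
    rw [show ((M:ℕ) : ZMod (8*M)) = (((M:ℕ):ℤ) : ZMod (8*M)) by push_cast; ring, castNeg]
    intro h
    have := castInjZ M hM _ _ (by push_cast; omega) (by push_cast; omega)
      (by push_cast; omega) (by push_cast; omega) h
    omega
  simp only [elemMove, if_pos, posMove]
  rw [if_neg hne]

lemma stepData (t : ℕ) (q : A.Q) (v : EV M)
    (hrun : eRun r M i A c t = some (q, v))
    (hlab : elemLab r M i true v = Sum.inr 0)
    (hnn : eRun r M i A c (t+1) ≠ none) :
    ∃ q' d, eDir r M i A c t = some d ∧
      eRun r M i A c (t+1) = (elemMove r M i true v d).map (fun w => (q', w)) := by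
  have h1 : eRun r M i A c (t+1) =
      A.stepOn (elemMove r M i true) (elemLab r M i true) (q, v) := by
    rw [eRun_succ, hrun]; rfl
  unfold GWA.stepOn at h1
  simp only [hlab] at h1
  by_cases hF : A.F q (Sum.inr 0) = true
  · rw [if_pos hF] at h1; exact absurd h1 hnn
  · rw [if_neg hF] at h1
    cases hδ : A.δ q (Sum.inr 0) with
    | none => rw [hδ] at h1; exact absurd h1 hnn
    | some qd =>
      obtain ⟨q', d⟩ := qd
      rw [hδ] at h1
      exact ⟨q', d, by simp [eDir, hrun, hlab, hδ]; rfl, h1⟩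

lemma eC_const (a : ℕ) : ∀ b, a ≤ b → (∀ s, a ≤ s → s < b → ¬ Teleport r M i A c s) →
    eC r M i A c b = eC r M i A c a := by
  intro b hb
  induction b, hb using Nat.le_induction with
  | base => intro _; rfl
  | succ b hab ih =>
    intro hnt
    rw [eC_succ, if_neg (hnt b hab (by omega)), add_zero]
    exact ih (fun s h1 h2 => hnt s h1 (by omega))

lemma yP_sum_even (a : ℕ) : ∀ b, a ≤ b → (∀ s, a ≤ s → s < b → Even (eC r M i A c s)) →
    yP r M i A c b = yP r M i A c a + ∑ s ∈ Finset.Ico a b, gD r M i A c s := by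
  intro b hb
  induction b, hb using Nat.le_induction with
  | base => intro _; simp
  | succ b hab ih =>
    intro hev
    have h1 : yP r M i A c (b+1) = yP r M i A c b + gD r M i A c b := by
      simp only [yP]
      rw [if_pos (hev b hab (by omega))]
    rw [h1, ih (fun s h1 h2 => hev s h1 (by omega)), Finset.sum_Ico_succ_top hab]
    ring

lemma yP_sum_odd (a : ℕ) : ∀ b, a ≤ b → (∀ s, a ≤ s → s < b → ¬ Even (eC r M i A c s)) →
    yP r M i A c b = yP r M i A c a - ∑ s ∈ Finset.Ico a b, gD r M i A c s := by
  intro b hb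
  induction b, hb using Nat.le_induction with
  | base => intro _; simp
  | succ b hab ih =>
    intro hev
    have h1 : yP r M i A c (b+1) = yP r M i A c b - gD r M i A c b := by
      simp only [yP]
      rw [if_neg (hev b hab (by omega))]
      ring
    rw [h1, ih (fun s h1 h2 => hev s h1 (by omega)), Finset.sum_Ico_succ_top hab]
    ring

end Aux4
section Aux5
variable (r M : ℕ) (i : Fin r) (A : GWA (SK r)) (c : A.Q × EV M)

lemma castM : ((M : ℕ) : ZMod (8*M)) = (((M : ℕ) : ℤ) : ZMod (8*M)) := by push_cast; ring

lemma yM_of_teleport (hM : 0 < M) (t : ℕ)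
    (hnode : eNode r M i A c t = some (Sum.inl
      (((if Even (eC r M i A c t) then yP r M i A c t
          else 8*M - yP r M i A c t : ℤ)) : ZMod (8*M))))
    (hy1 : 1 ≤ yP r M i A c t) (hy2 : yP r M i A c t ≤ 2*M - 1)
    (htel : Teleport r M i A c t) : yP r M i A c t = M := by
  have hMz : (1:ℤ) ≤ (M:ℤ) := by exact_mod_cast hM
  set z : ℤ := if Even (eC r M i A c t) then yP r M i A c t
      else 8*M - yP r M i A c t with hzdef
  have hz0 : 0 ≤ z := by rw [hzdef]; split <;> omega
  have hz8 : z < 8*M := by rw [hzdef]; split <;> omega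
  rcases htel.1 with h | h
  · rw [hnode] at h
    have h' : (z : ZMod (8*M)) = (((M:ℕ):ℤ) : ZMod (8*M)) := by
      rw [← castM]
      exact Sum.inl.inj (Option.some.inj h)
    have hez := castInjZ M hM _ _ hz0 hz8 (by omega) (by omega) h'
    rw [hzdef] at hez
    split at hez <;> omega
  · rw [hnode, castM, castNeg] at h
    have h' : (z : ZMod (8*M)) = (((8*M - M : ℤ)) : ZMod (8*M)) :=
      Sum.inl.inj (Option.some.inj h)
    have hez := castInjZ M hM _ _ hz0 hz8 (by omega) (by omega) h'
    rw [hzdef] at hez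
    split at hez <;> omega

end Aux5
/-- a walker in the element E_i, repeating a periodic sequence
of moves over m-labelled nodes with net drift in direction a, which starts at
u_M and first reaches u_{2M} or u_0, reaches the segment beyond u_M (i.e.
u_{2M}) without returning to u_0 if and only if the number of its teleporting
±b_i moves at the pair {u_M, u_{-M}} made on the way is even (if that number
is odd, it is teleported to u_{-M} and, drifting in direction a, it returns
to u_0). -/
theorem stmt15 (n k r M : ℕ) (hn : 2 ≤ n) (hk : 4 ≤ k)
    (hr : r = (k - 2) / 2) (hM : M = bigM n k)
    (i : Fin r) (A : GWA (SK r)) (hQ : Nat.card A.Q ≤ 4 * n * k)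
    (q1 : A.Q) (p T : ℕ) (hp : 1 ≤ p) (hpQ : p ≤ Nat.card A.Q)
    (c : A.Q × EV M) (hc : c = (q1, Sum.inl ((M : ZMod (8 * M)))))
    (hdef : ∀ t, t ≤ T → eRun r M i A c t ≠ none)
    (hm : ∀ t v, t < T → eNode r M i A c t = some v →
      elemLab r M i true v = Sum.inr 0)
    (hper : ∀ t, t + p ≤ T → eState r M i A c (t + p) = eState r M i A c t)
    (hdrift : ((Finset.range p).filter
        (fun t => eDir r M i A c t = some (Sum.inl false))).card <
      ((Finset.range p).filter
        (fun t => eDir r M i A c t = some (Sum.inl true))).card)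
    (hT : eNode r M i A c T = some (Sum.inl ((2 * M : ℕ) : ZMod (8 * M))) ∨
      eNode r M i A c T = some (Sum.inl (0 : ZMod (8 * M))))
    (hfirst : ∀ t, t < T →
      eNode r M i A c t ≠ some (Sum.inl ((2 * M : ℕ) : ZMod (8 * M))) ∧
      (0 < t → eNode r M i A c t ≠ some (Sum.inl (0 : ZMod (8 * M))))) :
    eNode r M i A c T = some (Sum.inl ((2 * M : ℕ) : ZMod (8 * M))) ↔
      Even ((Finset.range T).filter (fun t => Teleport r M i A c t)).card     := by
  have hM0 : 0 < M := by rw [hM]; exact Nat.factorial_pos _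
  have hpM : p ≤ M := by
    calc p ≤ Nat.card A.Q := hpQ
    _ ≤ 4*n*k := hQ
    _ ≤ (4*n*k).factorial := Nat.self_le_factorial _
    _ = M := by rw [hM]; rfl
  have hMz : (1:ℤ) ≤ (M:ℤ) := by exact_mod_cast hM0
  have hpz : (1:ℤ) ≤ (p:ℤ) := by exact_mod_cast hp
  have hpMz : (p:ℤ) ≤ (M:ℤ) := by exact_mod_cast hpM
  have e2M : (((2*M:ℕ)) : ZMod (8*M)) = (((2*M:ℤ)) : ZMod (8*M)) := by push_cast; ring
  -- direction periodicity
  have hgper : ∀ t, t + p < T → gD r M i A c (t+p) = gD r M i A c t := by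
    intro t ht
    have hd : eDir r M i A c (t+p) = eDir r M i A c t := by
      obtain ⟨x, hx⟩ := Option.ne_none_iff_exists'.mp (hdef t (by omega))
      obtain ⟨x', hx'⟩ := Option.ne_none_iff_exists'.mp (hdef (t+p) (by omega))
      have hl : elemLab r M i true x.2 = Sum.inr 0 :=
        hm t x.2 (by omega) (by simp [eNode, hx])
      have hl' : elemLab r M i true x'.2 = Sum.inr 0 :=
        hm (t+p) x'.2 (by omega) (by simp [eNode, hx'])
      have hst : x'.1 = x.1 := by
        have h := hper t (by omega)
        simpa [eState, hx, hx'] using h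
      simp [eDir, hx, hx', hl, hl', hst]
    unfold gD; rw [hd]
  have hgbd : ∀ t, -1 ≤ gD r M i A c t := fun t => (gD_bounds r M i A c t).1
  have hbase : 1 ≤ ∑ s ∈ Finset.range p, gD r M i A c s := by
    have hpt : ∀ s, gD r M i A c s =
        (if eDir r M i A c s = some (Sum.inl true) then (1:ℤ) else 0)
        - (if eDir r M i A c s = some (Sum.inl false) then (1:ℤ) else 0) := by
      intro s; unfold gD
      by_cases h1 : eDir r M i A c s = some (Sum.inl true)
      · rw [if_pos h1, if_pos h1, if_neg (by rw [h1]; simp), sub_zero]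
      · by_cases h2 : eDir r M i A c s = some (Sum.inl false) <;>
          simp [h1, h2]
    rw [Finset.sum_congr rfl (fun s _ => hpt s), Finset.sum_sub_distrib,
      Finset.sum_boole, Finset.sum_boole]
    have hd := hdrift
    omega
  have hwin := windowSum p T (gD r M i A c) hp hgper hgbd hbase
    -- main invariant
  have main : ∀ t, t ≤ T →
      ∃ q : A.Q, eRun r M i A c t = some (q, Sum.inl
        (((if Even (eC r M i A c t) then yP r M i A c t
            else 8*M - yP r M i A c t : ℤ)) : ZMod (8*M))) ∧
      0 ≤ yP r M i A c t ∧ yP r M i A c t ≤ 2*M ∧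
      (t < T → 1 ≤ yP r M i A c t ∧ yP r M i A c t ≤ 2*M - 1) ∧
      (¬ Even (eC r M i A c t) → yP r M i A c t ≤ M + p - 1) ∧
      (Even (eC r M i A c t) → M - p + 1 ≤ yP r M i A c t) := by
    intro t
    induction t using Nat.strong_induction_on with
    | _ t IH =>
      intro htT
      match t with
      | 0 =>
        have he0 : eC r M i A c 0 = 0 := by simp [eC]
        have hy0 : yP r M i A c 0 = (M:ℤ) := rfl
        have hval : (if Even (eC r M i A c 0) then yP r M i A c 0
            else 8*M - yP r M i A c 0) = ((M:ℕ):ℤ) := by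
          rw [he0, hy0]; simp
        refine ⟨q1, ?_, by omega, by omega, fun _ => by omega, ?_, fun _ => by omega⟩
        · rw [hval, show eRun r M i A c 0 = some c from rfl, hc, castM]
        · rw [he0]; simp
      | (t' + 1) =>
        have ht' : t' < T := by omega
        obtain ⟨q, hrun, hy0, hy2, hstrict, _, _⟩ := IH t' (by omega) (by omega)
        obtain ⟨hylo, hyhi⟩ := hstrict ht'
        set z : ℤ := if Even (eC r M i A c t') then yP r M i A c t'
            else 8*M - yP r M i A c t' with hzdef
        have hnode : eNode r M i A c t' = some (Sum.inl ((z : ZMod (8*M)))) := by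
          simp [eNode, hrun]
        have hlab : elemLab r M i true (Sum.inl ((z : ZMod (8*M)))) = Sum.inr 0 :=
          hm t' _ ht' hnode
        obtain ⟨q', d, hdir, hrun'⟩ :=
          stepData r M i A c t' q _ hrun hlab (hdef (t'+1) (by omega))
        have hzrange : (1 ≤ z ∧ z ≤ 2*M - 1) ∨ (6*M + 1 ≤ z ∧ z ≤ 8*M - 1) := by
          rw [hzdef]; split
          · left; omega
          · right; omega
        have hz0 : 0 ≤ z := by rcases hzrange with ⟨h1,h2⟩|⟨h1,h2⟩ <;> omega
        have hz8 : z < 8*M := by rcases hzrange with ⟨h1,h2⟩|⟨h1,h2⟩ <;> omega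
        -- the drift bounds, valid independently of the step's direction
        have hbound : (¬ Even (eC r M i A c (t'+1)) → yP r M i A c (t'+1) ≤ M + p - 1) ∧
            (Even (eC r M i A c (t'+1)) → M - p + 1 ≤ yP r M i A c (t'+1)) := by
          by_cases hS : ((Finset.range (t'+1)).filter
              (fun s => Teleport r M i A c s)).Nonempty
          · set t₁ := Finset.max' _ hS with ht₁def
            have ht₁mem := Finset.max'_mem _ hS
            rw [Finset.mem_filter, Finset.mem_range] at ht₁mem
            obtain ⟨ht₁lt, htel⟩ := ht₁mem
            have hmax : ∀ u, u < t'+1 → Teleport r M i A c u → u ≤ t₁ := fun u hu htu =>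
              Finset.le_max' _ u (Finset.mem_filter.mpr ⟨Finset.mem_range.mpr hu, htu⟩)
            have hconst : ∀ s, t₁+1 ≤ s → s ≤ t'+1 →
                eC r M i A c s = eC r M i A c (t₁+1) := fun s h1 h2 =>
              eC_const r M i A c (t₁+1) s h1
                (fun u hu1 hu2 htu => by have := hmax u (by omega) htu; omega)
            obtain ⟨q₁, hrun₁, hy₁0, hy₁2, hstrict₁, _, _⟩ := IH t₁ (by omega) (by omega)
            obtain ⟨hy₁lo, hy₁hi⟩ := hstrict₁ (by omega)
            have hnode₁ : eNode r M i A c t₁ = some (Sum.inl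
                (((if Even (eC r M i A c t₁) then yP r M i A c t₁
                    else 8*M - yP r M i A c t₁ : ℤ)) : ZMod (8*M))) := by
              simp [eNode, hrun₁]
            have hyM : yP r M i A c t₁ = M :=
              yM_of_teleport r M i A c hM0 t₁ hnode₁ hy₁lo hy₁hi htel
            have hg₁ : gD r M i A c t₁ = 0 := by
              obtain ⟨sb, hd⟩ := htel.2
              simp [gD, ht₁def, hd]
            have hyM1 : yP r M i A c (t₁+1) = M := by
              simp only [yP]
              rw [hg₁, hyM]
              split <;> ring
            have hsum : 1 - (p:ℤ) ≤ ∑ s ∈ Finset.Ico (t₁+1) (t'+1), gD r M i A c s := by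
              have h := hwin (t'+1 - (t₁+1)) (t₁+1) (by omega)
              rwa [show t₁+1 + (t'+1 - (t₁+1)) = t'+1 by omega] at h
            constructor
            · intro hOdd
              have hy' := yP_sum_odd r M i A c (t₁+1) (t'+1) (by omega)
                (fun s h1 h2 hEv => by
                  rw [hconst s h1 (by omega), ← hconst (t'+1) (by omega) le_rfl] at hEv
                  exact hOdd hEv)
              rw [hyM1] at hy'
              omega
            · intro hEv
              have hy' := yP_sum_even r M i A c (t₁+1) (t'+1) (by omega)
                (fun s h1 h2 => by
                  rw [hconst s h1 (by omega), ← hconst (t'+1) (by omega) le_rfl]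
                  exact hEv)
              rw [hyM1] at hy'
              omega
          · have hforall : ∀ u, u < t'+1 → ¬ Teleport r M i A c u := fun u hu htu =>
              hS ⟨u, Finset.mem_filter.mpr ⟨Finset.mem_range.mpr hu, htu⟩⟩
            have hzero : ∀ s, s ≤ t'+1 → eC r M i A c s = 0 := by
              intro s hs
              have h := eC_const r M i A c 0 s (by omega)
                (fun u hu1 hu2 => hforall u (by omega))
              rw [h]; simp [eC]
            have hsum : 1 - (p:ℤ) ≤ ∑ s ∈ Finset.Ico 0 (t'+1), gD r M i A c s := by
              have h := hwin (t'+1) 0 (by omega)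
              rwa [zero_add] at h
            have hy' := yP_sum_even r M i A c 0 (t'+1) (by omega)
              (fun s h1 h2 => by rw [hzero s (by omega)]; simp)
            have hy00 : yP r M i A c 0 = (M:ℤ) := rfl
            rw [hy00] at hy'
            constructor
            · intro hOdd
              exact absurd (by rw [hzero (t'+1) le_rfl]; simp) hOdd
            · intro _
              omega

        -- case analysis on the direction
        have key2 : ∃ q'' : A.Q, eRun r M i A c (t'+1) = some (q'', Sum.inl
            (((if Even (eC r M i A c (t'+1)) then yP r M i A c (t'+1)
                else 8*M - yP r M i A c (t'+1) : ℤ)) : ZMod (8*M))) ∧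
            0 ≤ yP r M i A c (t'+1) ∧ yP r M i A c (t'+1) ≤ 2*M := by
          rcases d with b | ⟨s, sg⟩
          · -- a-move
            have hnt : ¬ Teleport r M i A c t' := by
              intro ht
              obtain ⟨sb, hd2⟩ := ht.2
              rw [hdir] at hd2
              simp at hd2
            have hec : eC r M i A c (t'+1) = eC r M i A c t' := by
              rw [eC_succ, if_neg hnt, add_zero]
            cases b
            · -- direction -a
              have hg : gD r M i A c t' = -1 := by simp [gD, hdir]
              have hystep : yP r M i A c (t'+1) = yP r M i A c t' - 1 ∨
                  yP r M i A c (t'+1) = yP r M i A c t' + 1 := by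
                simp only [yP]; rw [hg]
                split
                · left; ring
                · right; ring
              have hz' : (if Even (eC r M i A c (t'+1)) then yP r M i A c (t'+1)
                  else 8*M - yP r M i A c (t'+1)) = z - 1 := by
                rw [hec, hzdef]
                simp only [yP]; rw [hg]
                by_cases hE : Even (eC r M i A c t') <;> simp [hE] <;> ring
              refine ⟨q', ?_, by rcases hystep with h|h <;> omega,
                by rcases hystep with h|h <;> omega⟩
              rw [hrun', hz',
                show elemMove r M i true (Sum.inl ((z : ZMod (8*M)))) (Sum.inl false) =
                  some (Sum.inl ((z : ZMod (8*M)) - 1)) from rfl]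
              simp only [Option.map_some]
              congr 2
              push_cast
              ring
            · -- direction +a
              have hg : gD r M i A c t' = 1 := by simp [gD, hdir]
              have hystep : yP r M i A c (t'+1) = yP r M i A c t' + 1 ∨
                  yP r M i A c (t'+1) = yP r M i A c t' - 1 := by
                simp only [yP]; rw [hg]
                split
                · left; ring
                · right; ring
              have hz' : (if Even (eC r M i A c (t'+1)) then yP r M i A c (t'+1)
                  else 8*M - yP r M i A c (t'+1)) = z + 1 := by
                rw [hec, hzdef]
                simp only [yP]; rw [hg]
                by_cases hE : Even (eC r M i A c t') <;> simp [hE] <;> ring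
              refine ⟨q', ?_, by rcases hystep with h|h <;> omega,
                by rcases hystep with h|h <;> omega⟩
              rw [hrun', hz',
                show elemMove r M i true (Sum.inl ((z : ZMod (8*M)))) (Sum.inl true) =
                  some (Sum.inl ((z : ZMod (8*M)) + 1)) from rfl]
              simp only [Option.map_some]
              congr 2
              push_cast
              ring
          · -- b-move
            have hg : gD r M i A c t' = 0 := by simp [gD, hdir]
            have hyeq : yP r M i A c (t'+1) = yP r M i A c t' := by
              simp only [yP]; rw [hg]
              split <;> ring
            by_cases hsi : s = i
            · rw [hsi] at hdir hrun'
              by_cases hzM : z = (M:ℤ)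
              · -- teleport u_M → u_{-M}
                have hEy : Even (eC r M i A c t') ∧ yP r M i A c t' = (M:ℤ) := by
                  have h := hzM
                  rw [hzdef] at h
                  by_cases hE : Even (eC r M i A c t')
                  · rw [if_pos hE] at h; exact ⟨hE, h⟩
                  · exfalso; rw [if_neg hE] at h; omega
                have htel : Teleport r M i A c t' := by
                  refine ⟨Or.inl ?_, sg, hdir⟩
                  rw [hnode, hzM, castM]
                have hec : eC r M i A c (t'+1) = eC r M i A c t' + 1 := by
                  rw [eC_succ, if_pos htel]
                have hE' : ¬ Even (eC r M i A c (t'+1)) := by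
                  rw [hec]; simp [Nat.even_add_one, hEy.1]
                have hmov : elemMove r M i true (Sum.inl ((z : ZMod (8*M))))
                    (Sum.inr (i, sg)) = some (Sum.inl (-((M:ℕ) : ZMod (8*M)))) := by
                  rw [show ((z : ℤ) : ZMod (8*M)) = (((M:ℕ)) : ZMod (8*M)) by
                    rw [hzM, castM]]
                  exact telMoveM r M i hM0 sg
                have hz' : (if Even (eC r M i A c (t'+1)) then yP r M i A c (t'+1)
                    else 8*M - yP r M i A c (t'+1)) = 8*M - M := by
                  rw [if_neg hE', hyeq, hEy.2]
                refine ⟨q', ?_, by omega, by omega⟩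
                rw [hrun', hmov, hz']
                simp only [Option.map_some]
                rw [castM, castNeg]
              · by_cases hz7 : z = 8*M - M
                · -- teleport u_{-M} → u_M
                  have hEy : ¬ Even (eC r M i A c t') ∧ yP r M i A c t' = (M:ℤ) := by
                    have h := hz7
                    rw [hzdef] at h
                    by_cases hE : Even (eC r M i A c t')
                    · exfalso; rw [if_pos hE] at h; omega
                    · rw [if_neg hE] at h; exact ⟨hE, by omega⟩
                  have htel : Teleport r M i A c t' := by
                    refine ⟨Or.inr ?_, sg, hdir⟩
                    rw [hnode, hz7, castM, castNeg]
                  have hec : eC r M i A c (t'+1) = eC r M i A c t' + 1 := by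
                    rw [eC_succ, if_pos htel]
                  have hE' : Even (eC r M i A c (t'+1)) := by
                    rw [hec, Nat.even_add_one]
                    exact hEy.1
                  have hmov : elemMove r M i true (Sum.inl ((z : ZMod (8*M))))
                      (Sum.inr (i, sg)) = some (Sum.inl (((M:ℕ) : ZMod (8*M)))) := by
                    rw [show ((z : ℤ) : ZMod (8*M)) = -(((M:ℕ)) : ZMod (8*M)) by
                      rw [hz7, castM, castNeg]]
                    exact telMove7 r M i hM0 sg
                  have hz' : (if Even (eC r M i A c (t'+1)) then yP r M i A c (t'+1)
                      else 8*M - yP r M i A c (t'+1)) = (M:ℤ) := by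
                    rw [if_pos hE', hyeq, hEy.2]
                  refine ⟨q', ?_, by omega, by omega⟩
                  rw [hrun', hmov, hz']
                  simp only [Option.map_some]
                  rw [castM]
                · -- loop at a b-edge, direction b_i
                  have hnt : ¬ Teleport r M i A c t' := by
                    intro ht
                    rcases ht.1 with h | h
                    · rw [hnode, castM] at h
                      have h' := Sum.inl.inj (Option.some.inj h)
                      exact hzM (castInjZ M hM0 _ _ hz0 hz8 (by omega) (by omega) h')
                    · rw [hnode, castM, castNeg] at h
                      have h' := Sum.inl.inj (Option.some.inj h)
                      exact hz7 (castInjZ M hM0 _ _ hz0 hz8 (by omega) (by omega) h')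
                  have hec : eC r M i A c (t'+1) = eC r M i A c t' := by
                    rw [eC_succ, if_neg hnt, add_zero]
                  have hmov := loopMove r M i hM0 z hz0 hz8
                    (fun j hj => by interval_cases j <;> push_cast <;> omega) i sg
                  have hz' : (if Even (eC r M i A c (t'+1)) then yP r M i A c (t'+1)
                      else 8*M - yP r M i A c (t'+1)) = z := by
                    rw [hec, hyeq, hzdef]
                  refine ⟨q', ?_, by omega, by omega⟩
                  rw [hrun', hmov, hz']
                  simp only [Option.map_some]
            · -- loop at a b-edge, direction b_j with j ≠ i
              have hzne0 : ((z : ℤ) : ZMod (8*M)) ≠ 0 := by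
                intro h
                rw [show (0 : ZMod (8*M)) = (((0:ℤ)) : ZMod (8*M)) by norm_num] at h
                have h' := castInjZ M hM0 z 0 hz0 hz8 (by norm_num) (by positivity) h
                omega
              have hnt : ¬ Teleport r M i A c t' := by
                intro ht
                obtain ⟨sb, hd2⟩ := ht.2
                rw [hdir] at hd2
                have h' := Option.some.inj hd2
                simp at h'
                exact hsi h'.1
              have hec : eC r M i A c (t'+1) = eC r M i A c t' := by
                rw [eC_succ, if_neg hnt, add_zero]
              have hmov := loopMoveNe r M i ((z : ZMod (8*M))) hzne0 s hsi sg
              have hz' : (if Even (eC r M i A c (t'+1)) then yP r M i A c (t'+1)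
                  else 8*M - yP r M i A c (t'+1)) = z := by
                rw [hec, hyeq, hzdef]
              refine ⟨q', ?_, by omega, by omega⟩
              rw [hrun', hmov, hz']
              simp only [Option.map_some]


        obtain ⟨q'', hrunN, hyN0, hyN2⟩ := key2
        refine ⟨q'', hrunN, hyN0, hyN2, ?_, hbound.1, hbound.2⟩
        -- strict bounds from hfirst
        intro hlt
        constructor
        · by_contra hcon
          have hyz : yP r M i A c (t'+1) = 0 := by omega
          have h0 : eNode r M i A c (t'+1) = some (Sum.inl (0 : ZMod (8*M))) := by
            simp only [eNode, hrunN, Option.map_some, hyz]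
            congr 2
            split
            · norm_num
            · rw [sub_zero]
              have h8 := cast8M M
              push_cast at h8 ⊢
              exact h8
          exact (hfirst (t'+1) hlt).2 (by omega) h0
        · by_contra hcon
          have hyz : yP r M i A c (t'+1) = 2*M := by omega
          by_cases hE : Even (eC r M i A c (t'+1))
          · have h2 : eNode r M i A c (t'+1) = some (Sum.inl (((2*M:ℕ)) : ZMod (8*M))) := by
              simp only [eNode, hrunN, Option.map_some]
              rw [if_pos hE, hyz, e2M]
            exact (hfirst (t'+1) hlt).1 h2
          · have := hbound.1 hE
            omega
  -- final analysis at time T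
  obtain ⟨qT, hrunT, hyT0, hyT2, _, hOddT, hEvenT⟩ := main T le_rfl
  have hnodeT : eNode r M i A c T = some (Sum.inl
      (((if Even (eC r M i A c T) then yP r M i A c T
          else 8*M - yP r M i A c T : ℤ)) : ZMod (8*M))) := by
    simp [eNode, hrunT]
  show _ ↔ Even (eC r M i A c T)
  by_cases hE : Even (eC r M i A c T)
  · have hbd := hEvenT hE
    have hyT : yP r M i A c T = 2*M := by
      rcases hT with h | h
      · rw [hnodeT, e2M] at h
        have h' := Sum.inl.inj (Option.some.inj h)
        rw [if_pos hE] at h'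
        exact castInjZ M hM0 _ _ (by omega) (by omega) (by omega) (by omega) h'
      · rw [hnodeT, show (0 : ZMod (8*M)) = (((0:ℤ)) : ZMod (8*M)) by norm_num] at h
        have h' := Sum.inl.inj (Option.some.inj h)
        rw [if_pos hE] at h'
        have := castInjZ M hM0 _ _ (by omega) (by omega) (by norm_num) (by positivity) h'
        omega
    refine iff_of_true ?_ hE
    rw [hnodeT, if_pos hE, hyT, e2M]
  · refine iff_of_false ?_ hE
    intro h
    rw [hnodeT, e2M] at h
    have h' := Sum.inl.inj (Option.some.inj h)
    rw [if_neg hE] at h'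
    by_cases hy : yP r M i A c T = 0
    · rw [hy, sub_zero] at h'
      have h8 : ((8*(M:ℤ) : ℤ) : ZMod (8*M)) = (((0:ℤ)) : ZMod (8*M)) := by
        have h8' := cast8M M
        push_cast at h8' ⊢
        exact h8'
      rw [h8] at h'
      have := castInjZ M hM0 _ _ (by norm_num) (by positivity) (by omega) (by omega) h'
      omega
    · have := castInjZ M hM0 _ _ (by omega) (by omega) (by omega) (by omega) h'
      omega
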